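/- Let $\mu \in \mathbb{R}$ and let $F$ be the distribution of $\theta Y + \mu$, where $Y$ has a continuous distribution with a density that is unimodal and symmetric about $0$, $\theta$ is a positive random variable independent of $Y$. Then for every $n \ge 2$, $F$ is $n$-completely mixable with center $\mu$: there exist random variables $X_1,\dots,X_n$, each distributed as $F$, with $P(X_1 + \cdots + X_n = n\mu) = 1$. -/

import Mathlib

open MeasureTheory ProbabilityTheory Set
open scoped ENNReal

noncomputable section

namespace Stmt9Aux


/-- uniform measure on `(-1,1)` (unnormalized: total mass 2). -/
def u1 : Measure ℝ := volume.restrict (Set.Ioo (-1) 1)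

lemma measurable_realSign : Measurable Real.sign := by
  have h : Real.sign = fun r : ℝ => if r < 0 then (-1 : ℝ) else if 0 < r then 1 else 0 :=
    funext fun r => rfl
  rw [h]
  exact Measurable.ite (measurableSet_lt measurable_id measurable_const) measurable_const
    (Measurable.ite (measurableSet_lt measurable_const measurable_id) measurable_const
      measurable_const)

lemma map_affine_volume (a c : ℝ) (ha : a ≠ 0) :
    Measure.map (fun w => a * w + c) volume = ENNReal.ofReal |a⁻¹| • volume := by
  have h : (fun w : ℝ => a * w + c) = (fun y : ℝ => y + c) ∘ (fun w : ℝ => a * w) := rfl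
  rw [h, ← Measure.map_map (by fun_prop) (by fun_prop)]
  have h2 : Measure.map (fun w : ℝ => a * w) volume = ENNReal.ofReal |a⁻¹| • volume :=
    Real.map_volume_mul_left ha
  rw [h2, Measure.map_smul, map_add_right_eq_self volume c]

lemma map_affine_restrict (a c : ℝ) (ha : a ≠ 0) {J : Set ℝ} (hJ : MeasurableSet J) :
    Measure.map (fun w => a * w + c) (volume.restrict ((fun w : ℝ => a * w + c) ⁻¹' J)) =
      ENNReal.ofReal |a⁻¹| • volume.restrict J := by
  rw [← Measure.restrict_map (by fun_prop) hJ, map_affine_volume a c ha,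
    Measure.restrict_smul]

lemma u1_split :
    u1 = volume.restrict (Set.Ioo (-1) 0) + volume.restrict (Set.Ioo 0 1) := by
  have hdisj : Disjoint (Set.Ioo (-1 : ℝ) 0) (Set.Ioo 0 1) := by
    apply Set.disjoint_left.2
    rintro x ⟨_, h2⟩ ⟨h3, _⟩; linarith
  rw [← Measure.restrict_union hdisj measurableSet_Ioo]
  apply Measure.restrict_congr_set
  rw [ae_eq_set]
  refine ⟨?_, ?_⟩
  · refine measure_mono_null ?_ (Real.volume_singleton (a := 0))
    rintro x ⟨⟨h1, h2⟩, hnx⟩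
    rcases lt_trichotomy x 0 with h | h | h
    · exact absurd (Set.mem_union_left _ (Set.mem_Ioo.2 ⟨h1, h⟩)) hnx
    · exact h
    · exact absurd (Set.mem_union_right _ (Set.mem_Ioo.2 ⟨h, h2⟩)) hnx
  · have hsub : (Set.Ioo (-1 : ℝ) 0 ∪ Set.Ioo 0 1) ⊆ Set.Ioo (-1 : ℝ) 1 := by
      rintro x (⟨h1, h2⟩ | ⟨h1, h2⟩) <;> exact ⟨by linarith, by linarith⟩
    rw [Set.diff_eq_empty.mpr hsub]
    exact measure_empty

lemma map_neg_u1 : Measure.map (fun w : ℝ => -w) u1 = u1 := by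
  have h : (fun w : ℝ => -w) = fun w : ℝ => (-1) * w + 0 := by funext w; ring
  have hpre : (fun w : ℝ => (-1) * w + 0) ⁻¹' (Set.Ioo (-1) 1) = Set.Ioo (-1 : ℝ) 1 := by
    ext x; simp only [Set.mem_preimage, Set.mem_Ioo]; constructor <;> (rintro ⟨h1, h2⟩; constructor <;> linarith)
  rw [u1, h, ← hpre, map_affine_restrict (-1) 0 (by norm_num) measurableSet_Ioo]
  norm_num

lemma map_g1_u1 : Measure.map (fun w : ℝ => w - Real.sign w) u1 = u1 := by
  have hm : Measurable (fun w : ℝ => w - Real.sign w) :=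
    measurable_id.sub measurable_realSign
  rw [u1_split, Measure.map_add _ _ hm]
  have h1 : Measure.map (fun w : ℝ => w - Real.sign w) (volume.restrict (Set.Ioo (-1) 0)) =
      volume.restrict (Set.Ioo 0 1) := by
    have hae : (fun w : ℝ => w - Real.sign w) =ᵐ[volume.restrict (Set.Ioo (-1) 0)]
        (fun w : ℝ => 1 * w + 1) := by
      filter_upwards [ae_restrict_mem measurableSet_Ioo] with w hw
      rw [Real.sign_of_neg hw.2]; ring
    rw [Measure.map_congr hae]
    have hpre : (fun w : ℝ => 1 * w + 1) ⁻¹' (Set.Ioo 0 1) = Set.Ioo (-1 : ℝ) 0 := by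
      ext x; simp only [Set.mem_preimage, Set.mem_Ioo]; constructor <;> (rintro ⟨h1, h2⟩; constructor <;> linarith)
    rw [← hpre, map_affine_restrict 1 1 one_ne_zero measurableSet_Ioo]
    norm_num
  have h2 : Measure.map (fun w : ℝ => w - Real.sign w) (volume.restrict (Set.Ioo 0 1)) =
      volume.restrict (Set.Ioo (-1) 0) := by
    have hae : (fun w : ℝ => w - Real.sign w) =ᵐ[volume.restrict (Set.Ioo 0 1)]
        (fun w : ℝ => 1 * w + (-1)) := by
      filter_upwards [ae_restrict_mem measurableSet_Ioo] with w hw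
      rw [Real.sign_of_pos hw.1]; ring
    rw [Measure.map_congr hae]
    have hpre : (fun w : ℝ => 1 * w + (-1)) ⁻¹' (Set.Ioo (-1) 0) = Set.Ioo (0 : ℝ) 1 := by
      ext x; simp only [Set.mem_preimage, Set.mem_Ioo]; constructor <;> (rintro ⟨h1, h2⟩; constructor <;> linarith)
    rw [← hpre, map_affine_restrict 1 (-1) one_ne_zero measurableSet_Ioo]
    norm_num
  rw [h1, h2, add_comm]

lemma map_g2_u1 : Measure.map (fun w : ℝ => -2 * w + Real.sign w) u1 = u1 := by
  have hm : Measurable (fun w : ℝ => -2 * w + Real.sign w) := by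
    exact (measurable_const.mul measurable_id).add measurable_realSign
  rw [u1_split, Measure.map_add _ _ hm]
  have h1 : Measure.map (fun w : ℝ => -2 * w + Real.sign w) (volume.restrict (Set.Ioo (-1) 0)) =
      ENNReal.ofReal 2⁻¹ • u1 := by
    have hae : (fun w : ℝ => -2 * w + Real.sign w) =ᵐ[volume.restrict (Set.Ioo (-1) 0)]
        (fun w : ℝ => (-2) * w + (-1)) := by
      filter_upwards [ae_restrict_mem measurableSet_Ioo] with w hw
      rw [Real.sign_of_neg hw.2]
    rw [Measure.map_congr hae]
    have hpre : (fun w : ℝ => (-2) * w + (-1)) ⁻¹' (Set.Ioo (-1) 1) = Set.Ioo (-1 : ℝ) 0 := by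
      ext x; simp only [Set.mem_preimage, Set.mem_Ioo]; constructor <;> (rintro ⟨h1, h2⟩; constructor <;> linarith)
    rw [← hpre, map_affine_restrict (-2) (-1) (by norm_num) measurableSet_Ioo,
      show |(-2 : ℝ)⁻¹| = 2⁻¹ by rw [abs_inv, abs_neg]; norm_num]
    rfl
  have h2 : Measure.map (fun w : ℝ => -2 * w + Real.sign w) (volume.restrict (Set.Ioo 0 1)) =
      ENNReal.ofReal 2⁻¹ • u1 := by
    have hae : (fun w : ℝ => -2 * w + Real.sign w) =ᵐ[volume.restrict (Set.Ioo 0 1)]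
        (fun w : ℝ => (-2) * w + 1) := by
      filter_upwards [ae_restrict_mem measurableSet_Ioo] with w hw
      rw [Real.sign_of_pos hw.1]
    rw [Measure.map_congr hae]
    have hpre : (fun w : ℝ => (-2) * w + 1) ⁻¹' (Set.Ioo (-1) 1) = Set.Ioo (0 : ℝ) 1 := by
      ext x; simp only [Set.mem_preimage, Set.mem_Ioo]; constructor <;> (rintro ⟨h1, h2⟩; constructor <;> linarith)
    rw [← hpre, map_affine_restrict (-2) 1 (by norm_num) measurableSet_Ioo,
      show |(-2 : ℝ)⁻¹| = 2⁻¹ by rw [abs_inv, abs_neg]; norm_num]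
    rfl
  rw [h1, h2, ← u1_split, ← add_smul, ← ENNReal.ofReal_add (by norm_num) (by norm_num)]
  norm_num

/-- mixing maps: for odd `n` the first three indices carry a 3-mix of the uniform
distribution on `(-1,1)`; remaining indices (all of them, when `n` is even) pair up
`w ↦ w` with `w ↦ -w`. -/
def Tmap (n i : ℕ) : ℝ → ℝ :=
  if n % 2 = 1 ∧ i < 3 then
    (if i = 0 then fun w => w else if i = 1 then fun w => w - Real.sign w
      else fun w => -2 * w + Real.sign w)
  else if i % 2 = n % 2 then fun w => -w else fun w => w

lemma Tmap_measurable (n i : ℕ) : Measurable (Tmap n i) := by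
  unfold Tmap
  split_ifs
  · exact measurable_id
  · exact measurable_id.sub measurable_realSign
  · exact (measurable_const.mul measurable_id).add measurable_realSign
  · exact measurable_id.neg
  · exact measurable_id

lemma Tmap_map_u1 (n i : ℕ) : Measure.map (Tmap n i) u1 = u1 := by
  unfold Tmap
  split_ifs
  · exact Measure.map_id
  · exact map_g1_u1
  · exact map_g2_u1
  · exact map_neg_u1
  · exact Measure.map_id

lemma pair_sum (k : ℕ) (w : ℝ) :
    ∑ i ∈ Finset.range (2 * k), (if i % 2 = 0 then -w else w) = 0 := by
  induction k with
  | zero => simp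
  | succ k ih =>
    have h : 2 * (k + 1) = (2 * k + 1) + 1 := by ring
    rw [h, Finset.sum_range_succ, Finset.sum_range_succ, ih]
    have h1 : (2 * k) % 2 = 0 := by omega
    have h2 : (2 * k + 1) % 2 ≠ 0 := by omega
    rw [if_pos h1, if_neg h2]
    ring

lemma Tmap_sum (n : ℕ) (hn : 2 ≤ n) (w : ℝ) :
    ∑ i ∈ Finset.range n, Tmap n i w = 0 := by
  rcases Nat.even_or_odd n with he | ho
  · have hmod : n % 2 = 0 := Nat.even_iff.mp he
    have hterm : ∀ i, Tmap n i w = (if i % 2 = 0 then -w else w) := by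
      intro i
      unfold Tmap
      rw [if_neg (by omega), hmod]
      split_ifs <;> rfl
    obtain ⟨k, hk⟩ := he
    calc ∑ i ∈ Finset.range n, Tmap n i w
        = ∑ i ∈ Finset.range (2 * k), (if i % 2 = 0 then -w else w) := by
          rw [Finset.sum_congr rfl fun i _ => hterm i, show n = 2 * k by omega]
      _ = 0 := pair_sum k w
  · have hmod : n % 2 = 1 := Nat.odd_iff.mp ho
    have h3n : 3 ≤ n := by omega
    have hsplit : ∑ i ∈ Finset.range n, Tmap n i w
        = ∑ i ∈ Finset.range 3, Tmap n i w + ∑ i ∈ Finset.Ico 3 n, Tmap n i w := by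
      rw [Finset.range_eq_Ico, ← Finset.sum_Ico_consecutive _ (by omega : 0 ≤ 3) h3n,
        ← Finset.range_eq_Ico]
    have hfirst : ∑ i ∈ Finset.range 3, Tmap n i w = 0 := by
      have e0 : Tmap n 0 w = w := by unfold Tmap; rw [if_pos ⟨hmod, by omega⟩]; simp
      have e1 : Tmap n 1 w = w - Real.sign w := by
        unfold Tmap; rw [if_pos ⟨hmod, by omega⟩]; norm_num
      have e2 : Tmap n 2 w = -2 * w + Real.sign w := by
        unfold Tmap; rw [if_pos ⟨hmod, by omega⟩]; norm_num
      rw [Finset.sum_range_succ, Finset.sum_range_succ, Finset.sum_range_one, e0, e1, e2]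
      ring
    have htail : ∑ i ∈ Finset.Ico 3 n, Tmap n i w = 0 := by
      have hterm : ∀ i ∈ Finset.Ico 3 n, Tmap n i w = (if (i - 3) % 2 = 0 then -w else w) := by
        intro i hi
        simp only [Finset.mem_Ico] at hi
        unfold Tmap
        rw [if_neg (by omega), hmod]
        have : i % 2 = 1 ↔ (i - 3) % 2 = 0 := by omega
        by_cases hpar : (i - 3) % 2 = 0
        · rw [if_pos (this.mpr hpar), if_pos hpar]
        · rw [if_neg (fun h => hpar (this.mp h)), if_neg hpar]
      rw [Finset.sum_congr rfl hterm, Finset.sum_Ico_eq_sum_range]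
      obtain ⟨k, hk⟩ : ∃ k, n - 3 = 2 * k := ⟨(n - 3) / 2, by omega⟩
      rw [hk]
      have : ∀ j, (3 + j - 3) % 2 = j % 2 := by omega
      calc ∑ j ∈ Finset.range (2 * k), (if (3 + j - 3) % 2 = 0 then -w else w)
          = ∑ j ∈ Finset.range (2 * k), (if j % 2 = 0 then -w else w) :=
            Finset.sum_congr rfl fun j _ => by rw [this j]
        _ = 0 := pair_sum k w
    rw [hsplit, hfirst, htail, add_zero]



section Density

variable {f : ℝ → ℝ}

lemma measurable_of_symm_unimodal (hf_symm : ∀ x, f (-x) = f x)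
    (hf_unimodal : AntitoneOn f (Set.Ici 0)) : Measurable f := by
  have habs : ∀ x, f x = f |x| := by
    intro x
    rcases le_or_gt 0 x with h | h
    · rw [abs_of_nonneg h]
    · rw [abs_of_neg h, ← hf_symm x]
  have hg : Antitone (fun x : ℝ => f (max x 0)) := by
    intro x y hxy
    exact hf_unimodal (le_max_right x 0) (le_max_right y 0) (max_le_max hxy le_rfl)
  have hfeq : f = (fun x : ℝ => f (max x 0)) ∘ (fun x : ℝ => |x|) := by
    funext x
    simp only [Function.comp_apply]
    rw [habs x, max_eq_left (abs_nonneg x)]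
  rw [hfeq]
  exact hg.measurable.comp measurable_abs

lemma f_abs (hf_symm : ∀ x, f (-x) = f x) (x : ℝ) : f x = f |x| := by
  rcases le_or_gt 0 x with h | h
  · rw [abs_of_nonneg h]
  · rw [abs_of_neg h, ← hf_symm x]

end Density

/-- the half-width of the super-level set `{f > h}`, for `h > 0`. -/
def bfun (f : ℝ → ℝ) (h : ℝ) : ℝ :=
  if 0 < h then sSup {x : ℝ | 0 ≤ x ∧ h < f x} else 0

section Bfun

variable {f : ℝ → ℝ}

lemma bfun_nonneg (f : ℝ → ℝ) (h : ℝ) : 0 ≤ bfun f h := by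
  unfold bfun
  split_ifs with hh
  · rcases Set.eq_empty_or_nonempty {x : ℝ | 0 ≤ x ∧ h < f x} with he | ⟨x, hx⟩
    · rw [he, Real.sSup_empty]
    · by_cases hb : BddAbove {x : ℝ | 0 ≤ x ∧ h < f x}
      · exact le_trans hx.1 (le_csSup hb hx)
      · rw [Real.sSup_of_not_bddAbove hb]
  · exact le_refl 0

-- bounded superlevel sets, given finite total lintegral
lemma bddAbove_superlevel (hf_unimodal : AntitoneOn f (Set.Ici 0))
    (hfint : ∫⁻ z, ENNReal.ofReal (f z) ∂volume = 1) {h : ℝ} (hh : 0 < h) :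
    BddAbove {x : ℝ | 0 ≤ x ∧ h < f x} := by
  by_contra hb
  -- then f > h on all of [0, ∞), so the integral is infinite
  have hall : ∀ z : ℝ, 0 ≤ z → h < f z := by
    intro z hz
    obtain ⟨x, hx, hzx⟩ := not_bddAbove_iff.mp hb z
    exact lt_of_lt_of_le hx.2 (hf_unimodal hz (le_trans hz hzx.le) hzx.le)
  have hge : ∫⁻ z in Set.Ici (0:ℝ), ENNReal.ofReal h ∂volume
      ≤ ∫⁻ z in Set.Ici (0:ℝ), ENNReal.ofReal (f z) ∂volume := by
    apply lintegral_mono_ae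
    filter_upwards [ae_restrict_mem measurableSet_Ici] with z hz
    exact ENNReal.ofReal_le_ofReal (hall z hz).le
  have hinfty : ∫⁻ z in Set.Ici (0:ℝ), ENNReal.ofReal h ∂volume = ⊤ := by
    rw [lintegral_const, Measure.restrict_apply_univ, Real.volume_Ici,
      ENNReal.mul_top (by simpa using hh)]
  have hle : ∫⁻ z in Set.Ici (0:ℝ), ENNReal.ofReal (f z) ∂volume ≤ 1 := by
    rw [← hfint]
    exact setLIntegral_le_lintegral _ _
  rw [hinfty] at hge
  exact absurd (le_trans hge hle) (by simp)

lemma bfun_mem_of (hf_symm : ∀ x, f (-x) = f x) (hf_unimodal : AntitoneOn f (Set.Ici 0))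
    (hfint : ∫⁻ z, ENNReal.ofReal (f z) ∂volume = 1)
    {h z : ℝ} (hh : 0 < h) (hz : h < f z) : |z| ≤ bfun f h := by
  unfold bfun
  rw [if_pos hh]
  apply le_csSup (bddAbove_superlevel hf_unimodal hfint hh)
  exact ⟨abs_nonneg z, by rw [← f_abs hf_symm]; exact hz⟩

lemma lt_f_of_lt_bfun (hf_symm : ∀ x, f (-x) = f x) (hf_unimodal : AntitoneOn f (Set.Ici 0))
    {h z : ℝ} (hh : 0 < h) (hz : |z| < bfun f h) : h < f z := by
  unfold bfun at hz
  rw [if_pos hh] at hz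
  have hne : {x : ℝ | 0 ≤ x ∧ h < f x}.Nonempty := by
    by_contra hempty
    rw [Set.not_nonempty_iff_eq_empty.mp hempty, Real.sSup_empty] at hz
    exact absurd hz (not_lt.mpr (abs_nonneg z))
  obtain ⟨x, hx, hlt⟩ := exists_lt_of_lt_csSup hne hz
  rw [f_abs hf_symm z]
  exact lt_of_lt_of_le hx.2 (hf_unimodal (abs_nonneg z) (le_trans (abs_nonneg z) hlt.le) hlt.le)

lemma bfun_antitoneOn (hf_unimodal : AntitoneOn f (Set.Ici 0))
    (hfint : ∫⁻ z, ENNReal.ofReal (f z) ∂volume = 1) :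
    AntitoneOn (bfun f) (Set.Ioi 0) := by
  intro h1 h1m h2 h2m h12
  simp only [Set.mem_Ioi] at h1m h2m
  unfold bfun
  rw [if_pos h1m, if_pos h2m]
  rcases Set.eq_empty_or_nonempty {x : ℝ | 0 ≤ x ∧ h2 < f x} with he | hne
  · rw [he, Real.sSup_empty]
    rcases Set.eq_empty_or_nonempty {x : ℝ | 0 ≤ x ∧ h1 < f x} with he1 | ⟨x, hx⟩
    · rw [he1, Real.sSup_empty]
    · exact le_trans hx.1 (le_csSup (bddAbove_superlevel hf_unimodal hfint h1m) hx)
  · apply csSup_le_csSup (bddAbove_superlevel hf_unimodal hfint h1m) hne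
    rintro x ⟨hx0, hx⟩
    exact ⟨hx0, lt_of_le_of_lt h12 hx⟩

lemma measurable_bfun (hf_unimodal : AntitoneOn f (Set.Ici 0))
    (hfint : ∫⁻ z, ENNReal.ofReal (f z) ∂volume = 1) :
    Measurable (bfun f) := by
  apply measurable_of_Iio
  intro t
  have hdecomp : bfun f ⁻¹' (Set.Iio t) =
      ({h : ℝ | 0 < h} ∩ bfun f ⁻¹' (Set.Iio t)) ∪
      ({h : ℝ | ¬ 0 < h} ∩ bfun f ⁻¹' (Set.Iio t)) := by
    ext h
    by_cases h0 : 0 < h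
    · simp [h0]
    · simp [h0, not_lt.mp h0]
  rw [hdecomp]
  apply MeasurableSet.union
  · -- on (0, ∞) the function is antitone, so the sublevel set is upward closed there
    have hord : Set.OrdConnected ({h : ℝ | 0 < h} ∩ bfun f ⁻¹' (Set.Iio t)) := by
      constructor
      rintro x ⟨hx0, hxt⟩ y ⟨hy0, hyt⟩ z ⟨hxz, hzy⟩
      have hz0 : 0 < z := lt_of_lt_of_le hx0 hxz
      refine ⟨hz0, ?_⟩
      simp only [Set.mem_preimage, Set.mem_Iio] at hxt ⊢
      exact lt_of_le_of_lt
        (bfun_antitoneOn hf_unimodal hfint (Set.mem_Ioi.mpr hx0) (Set.mem_Ioi.mpr hz0) hxz) hxt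
    exact hord.measurableSet
  · -- on (-∞, 0] the function is constant 0
    by_cases ht : 0 < t
    · have : ({h : ℝ | ¬ 0 < h} ∩ bfun f ⁻¹' (Set.Iio t)) = {h : ℝ | ¬ 0 < h} := by
        ext h
        simp only [Set.mem_inter_iff, Set.mem_setOf_eq, Set.mem_preimage, Set.mem_Iio,
          and_iff_left_iff_imp]
        intro h0
        unfold bfun
        rw [if_neg h0]
        exact ht
      rw [this, show {h : ℝ | ¬ 0 < h} = Set.Iic 0 by ext h; simp [not_lt]]
      exact measurableSet_Iic
    · have : ({h : ℝ | ¬ 0 < h} ∩ bfun f ⁻¹' (Set.Iio t)) = ∅ := by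
        ext h
        simp only [Set.mem_inter_iff, Set.mem_setOf_eq, Set.mem_preimage, Set.mem_Iio,
          Set.mem_empty_iff_false, iff_false, not_and]
        intro h0
        unfold bfun
        rw [if_neg h0]
        exact fun h => ht h
      rw [this]
      exact MeasurableSet.empty

end Bfun

/-- scaled uniform-preservation: if `T` preserves the uniform distribution on `(-1,1)`,
then `z ↦ b T(z/b)` preserves the uniform distribution on `(-b,b)`. -/
lemma map_scaled (T : ℝ → ℝ) (hTm : Measurable T) (hT : Measure.map T u1 = u1)
    {b : ℝ} (hb : 0 < b) :
    Measure.map (fun z : ℝ => b * T (z / b)) (volume.restrict (Set.Ioo (-b) b)) =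
      volume.restrict (Set.Ioo (-b) b) := by
  have hbne : b ≠ 0 := hb.ne'
  have hcomp : (fun z : ℝ => b * T (z / b)) =
      (fun y : ℝ => b * y + 0) ∘ T ∘ (fun z : ℝ => b⁻¹ * z + 0) := by
    funext z
    simp only [Function.comp_apply, add_zero, div_eq_inv_mul]
  have hpre1 : (fun z : ℝ => b⁻¹ * z + 0) ⁻¹' (Set.Ioo (-1) 1) = Set.Ioo (-b) b := by
    ext z
    simp only [Set.mem_preimage, Set.mem_Ioo, add_zero]
    constructor
    · rintro ⟨h1, h2⟩
      constructor <;> nlinarith [mul_inv_cancel₀ hbne, inv_pos.mpr hb]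
    · rintro ⟨h1, h2⟩
      constructor <;> nlinarith [mul_inv_cancel₀ hbne, inv_pos.mpr hb]
  have hpre2 : (fun y : ℝ => b * y + 0) ⁻¹' (Set.Ioo (-b) b) = Set.Ioo (-1 : ℝ) 1 := by
    ext y
    simp only [Set.mem_preimage, Set.mem_Ioo, add_zero]
    constructor
    · rintro ⟨h1, h2⟩
      constructor <;> nlinarith
    · rintro ⟨h1, h2⟩
      constructor <;> nlinarith
  rw [hcomp, ← Function.comp_assoc]
  rw [← Measure.map_map (by fun_prop) (by fun_prop)]
  rw [← hpre1, map_affine_restrict b⁻¹ 0 (inv_ne_zero hbne) measurableSet_Ioo]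
  rw [inv_inv, abs_of_pos hb, hpre1]
  rw [Measure.map_smul]
  have hT' : Measure.map T (volume.restrict (Set.Ioo (-1) 1)) =
      volume.restrict (Set.Ioo (-1) 1) := hT
  rw [← Measure.map_map (by fun_prop) hTm, hT']
  rw [show (volume.restrict (Set.Ioo (-1 : ℝ) 1)) =
      volume.restrict ((fun y : ℝ => b * y + 0) ⁻¹' (Set.Ioo (-b) b)) by rw [hpre2]]
  rw [map_affine_restrict b 0 hbne measurableSet_Ioo]
  rw [smul_smul, ← ENNReal.ofReal_mul hb.le, abs_inv, abs_of_pos hb,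
    mul_inv_cancel₀ hbne, ENNReal.ofReal_one, one_smul]

section Region

variable (f : ℝ → ℝ)

/-- region under the graph of `f`. -/
def Rgn : Set (ℝ × ℝ) := {p : ℝ × ℝ | 0 < p.2 ∧ p.2 < f p.1}

/-- "uniform" measure under the graph of `f`. -/
def rho : Measure (ℝ × ℝ) := (volume : Measure (ℝ × ℝ)).restrict (Rgn f)

variable {f}

lemma measurableSet_Rgn (hfm : Measurable f) : MeasurableSet (Rgn f) :=
  (measurableSet_lt measurable_const measurable_snd).inter
    (measurableSet_lt measurable_snd (hfm.comp measurable_fst))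

lemma rho_apply (hfm : Measurable f) {A : Set (ℝ × ℝ)} (hA : MeasurableSet A) :
    rho f A = ∫⁻ h, volume {z : ℝ | (z, h) ∈ A ∩ Rgn f} ∂volume := by
  rw [rho, Measure.restrict_apply hA, Measure.volume_eq_prod ℝ ℝ,
    Measure.prod_apply_symm (hA.inter (measurableSet_Rgn hfm))]
  rfl

lemma rho_fst (hfm : Measurable f) (hf_nonneg : ∀ x, 0 ≤ f x)
    (hfi : ∀ x : ℝ, IntegrableOn f (Set.Iic x)) (x : ℝ) :
    rho f {p : ℝ × ℝ | p.1 ≤ x} = ENNReal.ofReal (∫ t in Set.Iic x, f t) := by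
  have hA : MeasurableSet {p : ℝ × ℝ | p.1 ≤ x} :=
    measurableSet_le measurable_fst measurable_const
  rw [rho, Measure.restrict_apply hA, Measure.volume_eq_prod ℝ ℝ,
    Measure.prod_apply (hA.inter (measurableSet_Rgn hfm))]
  have hsec : ∀ z : ℝ, (Prod.mk z ⁻¹' ({p : ℝ × ℝ | p.1 ≤ x} ∩ Rgn f)) =
      if z ∈ Set.Iic x then Set.Ioo 0 (f z) else (∅ : Set ℝ) := by
    intro z
    split_ifs with hz
    · ext h
      simp only [Set.mem_preimage, Set.mem_inter_iff, Set.mem_setOf_eq, Set.mem_Ioo, Rgn]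
      exact ⟨fun ⟨_, h2⟩ => h2, fun h2 => ⟨hz, h2⟩⟩
    · ext h
      simp only [Set.mem_preimage, Set.mem_inter_iff, Set.mem_setOf_eq, Rgn,
        Set.mem_empty_iff_false, iff_false, not_and]
      exact fun hzx => absurd hzx hz
  calc ∫⁻ z, volume (Prod.mk z ⁻¹' ({p : ℝ × ℝ | p.1 ≤ x} ∩ Rgn f)) ∂volume
      = ∫⁻ z, (Set.Iic x).indicator (fun z => ENNReal.ofReal (f z)) z ∂volume := by
        apply lintegral_congr
        intro z
        rw [hsec z]
        by_cases hz : z ∈ Set.Iic x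
        · rw [if_pos hz, Set.indicator_of_mem hz, Real.volume_Ioo, sub_zero]
        · rw [if_neg hz, Set.indicator_of_notMem hz, measure_empty]
    _ = ∫⁻ z in Set.Iic x, ENNReal.ofReal (f z) ∂volume := by
        rw [lintegral_indicator measurableSet_Iic]
    _ = ENNReal.ofReal (∫ t in Set.Iic x, f t) := by
        rw [← ofReal_integral_eq_lintegral_ofReal (hfi x)
          (Filter.Eventually.of_forall fun z => hf_nonneg z)]

end Region

section Key

variable {f : ℝ → ℝ}

lemma slice_ae (hf_symm : ∀ x, f (-x) = f x) (hf_unimodal : AntitoneOn f (Set.Ici 0))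
    (hfint : ∫⁻ z, ENNReal.ofReal (f z) ∂volume = 1) {h : ℝ} (hh : 0 < h) :
    {z : ℝ | 0 < h ∧ h < f z} =ᵐ[volume] Set.Ioo (-(bfun f h)) (bfun f h) := by
  rw [ae_eq_set]
  constructor
  · refine measure_mono_null ?_ (((Set.finite_singleton (bfun f h)).insert (-(bfun f h))).measure_zero _)
    rintro z ⟨⟨_, hz⟩, hnz⟩
    have habs : |z| ≤ bfun f h := bfun_mem_of hf_symm hf_unimodal hfint hh hz
    simp only [Set.mem_Ioo, not_and_or, not_lt] at hnz
    rcases hnz with h1 | h1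
    · left
      have := neg_abs_le z
      have := abs_nonneg z
      show z = -(bfun f h)
      rcases abs_cases z with ⟨he, _⟩ | ⟨he, _⟩ <;> linarith
    · right
      show z ∈ ({bfun f h} : Set ℝ)
      have := le_abs_self z
      simp only [Set.mem_singleton_iff]
      rcases abs_cases z with ⟨he, _⟩ | ⟨he, _⟩ <;> linarith
  · refine measure_mono_null ?_ (measure_empty (μ := volume))
    rintro z ⟨hz, hnz⟩
    exact absurd ⟨hh, lt_f_of_lt_bfun hf_symm hf_unimodal hh (abs_lt.mpr ⟨hz.1, hz.2⟩)⟩ hnz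

lemma rho_G_cdf (hfm : Measurable f) (hf_symm : ∀ x, f (-x) = f x)
    (hf_unimodal : AntitoneOn f (Set.Ici 0))
    (hfint : ∫⁻ z, ENNReal.ofReal (f z) ∂volume = 1)
    (T : ℝ → ℝ) (hTm : Measurable T) (hT : Measure.map T u1 = u1) (x : ℝ) :
    rho f {p : ℝ × ℝ | bfun f p.2 * T (p.1 / bfun f p.2) ≤ x} =
      rho f {p : ℝ × ℝ | p.1 ≤ x} := by
  have hbm : Measurable (bfun f) := measurable_bfun hf_unimodal hfint
  have hGm : Measurable (fun p : ℝ × ℝ => bfun f p.2 * T (p.1 / bfun f p.2)) := by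
    apply Measurable.mul (hbm.comp measurable_snd)
    exact hTm.comp ((measurable_fst).div (hbm.comp measurable_snd))
  have hA1 : MeasurableSet {p : ℝ × ℝ | bfun f p.2 * T (p.1 / bfun f p.2) ≤ x} :=
    measurableSet_le hGm measurable_const
  have hA2 : MeasurableSet {p : ℝ × ℝ | p.1 ≤ x} :=
    measurableSet_le measurable_fst measurable_const
  rw [rho_apply hfm hA1, rho_apply hfm hA2]
  apply lintegral_congr
  intro h
  by_cases hh : 0 < h
  · set b := bfun f h with hbdef
    have hsec1 : {z : ℝ | (z, h) ∈ {p : ℝ × ℝ | bfun f p.2 * T (p.1 / bfun f p.2) ≤ x} ∩ Rgn f}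
        = {z : ℝ | b * T (z / b) ≤ x} ∩ {z : ℝ | 0 < h ∧ h < f z} := by
      ext z
      simp only [Set.mem_inter_iff, Set.mem_setOf_eq, Rgn]
      exact Iff.rfl
    have hsec2 : {z : ℝ | (z, h) ∈ {p : ℝ × ℝ | p.1 ≤ x} ∩ Rgn f}
        = Set.Iic x ∩ {z : ℝ | 0 < h ∧ h < f z} := by
      ext z
      simp only [Set.mem_inter_iff, Set.mem_setOf_eq, Rgn, Set.mem_Iic]
    have hae := slice_ae hf_symm hf_unimodal hfint hh
    rw [hsec1, hsec2,
      measure_congr (MeasureTheory.ae_eq_set_inter (Filter.EventuallyEq.refl _ {z : ℝ | b * T (z / b) ≤ x}) hae),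
      measure_congr (MeasureTheory.ae_eq_set_inter (Filter.EventuallyEq.refl _ (Set.Iic x)) hae)]
    rcases lt_or_eq_of_le (bfun_nonneg f h) with hb | hb
    · -- b > 0 : use measure preservation on the slice
      have hCm : MeasurableSet {z : ℝ | b * T (z / b) ≤ x} :=
        measurableSet_le (measurable_const.mul (hTm.comp (measurable_id.div measurable_const)))
          measurable_const
      have h1 : {z : ℝ | b * T (z / b) ≤ x} ∩ Set.Ioo (-b) b
          = (fun z : ℝ => b * T (z / b)) ⁻¹' (Set.Iic x) ∩ Set.Ioo (-b) b := rfl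
      rw [h1, ← Measure.restrict_apply' measurableSet_Ioo,
        ← Measure.map_apply (by fun_prop) measurableSet_Iic, map_scaled T hTm hT hb,
        Measure.restrict_apply' measurableSet_Ioo]
    · -- b = 0 : the slice is empty
      rw [← hb, neg_zero, Set.Ioo_self, Set.inter_empty, Set.inter_empty]
  · have he1 : {z : ℝ | (z, h) ∈ {p : ℝ × ℝ | bfun f p.2 * T (p.1 / bfun f p.2) ≤ x} ∩ Rgn f}
        = (∅ : Set ℝ) :=
      Set.eq_empty_iff_forall_notMem.mpr fun z hz => hh hz.2.1
    have he2 : {z : ℝ | (z, h) ∈ {p : ℝ × ℝ | p.1 ≤ x} ∩ Rgn f} = (∅ : Set ℝ) :=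
      Set.eq_empty_iff_forall_notMem.mpr fun z hz => hh hz.2.1
    rw [he1, he2]

end Key

lemma rho_univ {f : ℝ → ℝ} (hfm : Measurable f) :
    rho f Set.univ = ∫⁻ z, ENNReal.ofReal (f z) ∂volume := by
  rw [rho, Measure.restrict_apply_univ, Measure.volume_eq_prod ℝ ℝ,
    Measure.prod_apply (measurableSet_Rgn hfm)]
  apply lintegral_congr
  intro z
  have : Prod.mk z ⁻¹' Rgn f = Set.Ioo 0 (f z) := by
    ext h
    simp only [Set.mem_preimage, Rgn, Set.mem_setOf_eq, Set.mem_Ioo]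
  rw [this, Real.volume_Ioo, sub_zero]

end Stmt9Aux

open Stmt9Aux

theorem stmt9 (m : ℝ)
    (Ω₀ : Type*) [MeasurableSpace Ω₀] (μ₀ : Measure Ω₀) [IsProbabilityMeasure μ₀]
    (Y θ : Ω₀ → ℝ) (hYm : Measurable Y) (hθm : Measurable θ)
    (hθpos : ∀ᵐ ω ∂μ₀, 0 < θ ω) (hindep : IndepFun θ Y μ₀)
    (f : ℝ → ℝ) (hf_nonneg : ∀ x, 0 ≤ f x) (hf_symm : ∀ x, f (-x) = f x)
    (hf_unimodal : AntitoneOn f (Set.Ici 0))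
    (hYdens : ∀ x, μ₀ {ω | Y ω ≤ x} = ENNReal.ofReal (∫ t in Set.Iic x, f t))
    (F : ℝ → ℝ) (hF : ∀ x, F x = (μ₀ {ω | θ ω * Y ω + m ≤ x}).toReal)
    (n : ℕ) (hn : 2 ≤ n) :
    ∃ (Ω : Type) (_ : MeasurableSpace Ω) (μ : Measure Ω) (_ : IsProbabilityMeasure μ)
      (X : Fin n → Ω → ℝ),
      (∀ i, Measurable (X i)) ∧
      (∀ i x, μ {ω | X i ω ≤ x} = ENNReal.ofReal (F x)) ∧
      μ {ω | ∑ i, X i ω = n * m} = 1 := by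
  classical
  have hfm : Measurable f := measurable_of_symm_unimodal hf_symm hf_unimodal
  -- the sets {Y ≤ k} increase to the whole space
  have hmono : Monotone (fun k : ℕ => {ω : Ω₀ | Y ω ≤ (k : ℝ)}) := by
    intro a b hab ω hω
    simp only [Set.mem_setOf_eq] at hω ⊢
    exact le_trans hω ((Nat.cast_le (α := ℝ)).mpr hab)
  have hunion : (⋃ k : ℕ, {ω : Ω₀ | Y ω ≤ (k : ℝ)}) = Set.univ := by
    ext ω
    simp only [Set.mem_iUnion, Set.mem_setOf_eq, Set.mem_univ, iff_true]
    obtain ⟨k, hk⟩ := exists_nat_ge (Y ω)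
    exact ⟨k, hk⟩
  have htend : Filter.Tendsto (fun k : ℕ => μ₀ {ω : Ω₀ | Y ω ≤ (k : ℝ)}) Filter.atTop
      (nhds 1) := by
    have := tendsto_measure_iUnion_atTop (μ := μ₀) hmono
    rw [hunion] at this
    simpa [measure_univ, Function.comp_def] using this
  -- integrability of f on each Iic x
  have hfi : ∀ x : ℝ, IntegrableOn f (Set.Iic x) := by
    have hev : ∀ᶠ k : ℕ in Filter.atTop, (1 : ℝ≥0∞) / 2 < μ₀ {ω : Ω₀ | Y ω ≤ (k : ℝ)} :=
      htend.eventually (eventually_gt_nhds (by norm_num))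
    obtain ⟨k₀, hk₀⟩ := hev.exists
    intro x
    obtain ⟨k, hk⟩ := exists_nat_ge (max x (k₀ : ℝ))
    have hpos : 0 < μ₀ {ω : Ω₀ | Y ω ≤ (k : ℝ)} := by
      refine lt_of_lt_of_le (lt_of_le_of_lt zero_le hk₀) (measure_mono ?_)
      intro ω hω
      exact le_trans hω (le_trans (le_max_right x _) hk)
    have hne : (∫ t in Set.Iic (k : ℝ), f t) ≠ 0 := by
      intro h0
      rw [hYdens (k : ℝ), h0] at hpos
      simp at hpos
    have hik : IntegrableOn f (Set.Iic (k : ℝ)) := by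
      by_contra hni
      exact hne (integral_undef hni)
    exact hik.mono_set (Set.Iic_subset_Iic.mpr (le_trans (le_max_left x _) hk))
  -- total mass of f is 1
  have hfint : ∫⁻ z, ENNReal.ofReal (f z) ∂volume = 1 := by
    set ν : Measure ℝ := volume.withDensity (fun z => ENNReal.ofReal (f z)) with hν
    have hνIic : ∀ x : ℝ, ν (Set.Iic x) = μ₀ {ω : Ω₀ | Y ω ≤ x} := by
      intro x
      rw [hν, withDensity_apply _ measurableSet_Iic,
        ← ofReal_integral_eq_lintegral_ofReal (hfi x)
          (Filter.Eventually.of_forall fun z => hf_nonneg z), hYdens x]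
    have htend2 : Filter.Tendsto (fun k : ℕ => ν (Set.Iic (k : ℝ))) Filter.atTop
        (nhds (ν Set.univ)) := by
      have hm2 : Monotone (fun k : ℕ => Set.Iic ((k : ℕ) : ℝ)) := by
        intro a b hab
        exact Set.Iic_subset_Iic.mpr ((Nat.cast_le (α := ℝ)).mpr hab)
      have := tendsto_measure_iUnion_atTop (μ := ν) hm2
      have hu2 : (⋃ k : ℕ, Set.Iic ((k : ℕ) : ℝ)) = Set.univ := by
        ext t
        simp only [Set.mem_iUnion, Set.mem_Iic, Set.mem_univ, iff_true]
        exact exists_nat_ge t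
      rw [hu2] at this
      exact this
    have htend2' : Filter.Tendsto (fun k : ℕ => ν (Set.Iic (k : ℝ))) Filter.atTop (nhds 1) := by
      have : (fun k : ℕ => ν (Set.Iic (k : ℝ))) = fun k : ℕ => μ₀ {ω : Ω₀ | Y ω ≤ (k : ℝ)} :=
        funext fun k => hνIic _
      rw [this]
      exact htend
    have huniq : ν Set.univ = 1 := tendsto_nhds_unique htend2 htend2'
    rw [hν, withDensity_apply _ MeasurableSet.univ] at huniq
    rw [← setLIntegral_univ]
    exact huniq
  -- probability measures
  have hbm : Measurable (bfun f) := measurable_bfun hf_unimodal hfint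
  haveI hrho_prob : IsProbabilityMeasure (rho f) := ⟨by rw [rho_univ hfm]; exact hfint⟩
  haveI hPθ_prob : IsProbabilityMeasure (Measure.map θ μ₀) :=
    Measure.isProbabilityMeasure_map hθm.aemeasurable
  haveI hPY_prob : IsProbabilityMeasure (Measure.map Y μ₀) :=
    Measure.isProbabilityMeasure_map hYm.aemeasurable
  -- the coupled coordinates on the region
  set G : ℕ → ℝ × ℝ → ℝ := fun i p => bfun f p.2 * Tmap n i (p.1 / bfun f p.2) with hG
  have hGm : ∀ i, Measurable (G i) := by
    intro i
    apply Measurable.mul (hbm.comp measurable_snd)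
    exact (Tmap_measurable n i).comp (measurable_fst.div (hbm.comp measurable_snd))
  -- each G i has law P_Y under rho f
  have hGlaw : ∀ i, Measure.map (G i) (rho f) = Measure.map Y μ₀ := by
    intro i
    haveI : IsProbabilityMeasure (Measure.map (G i) (rho f)) :=
      Measure.isProbabilityMeasure_map (hGm i).aemeasurable
    apply MeasureTheory.Measure.ext_of_Iic
    intro a
    rw [Measure.map_apply (hGm i) measurableSet_Iic,
      Measure.map_apply hYm measurableSet_Iic]
    have hpre : G i ⁻¹' Set.Iic a = {p : ℝ × ℝ | bfun f p.2 * Tmap n i (p.1 / bfun f p.2) ≤ a} :=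
      rfl
    rw [hpre, rho_G_cdf hfm hf_symm hf_unimodal hfint _ (Tmap_measurable n i)
      (Tmap_map_u1 n i) a, rho_fst hfm hf_nonneg hfi a]
    rw [show Y ⁻¹' Set.Iic a = {ω : Ω₀ | Y ω ≤ a} from rfl, hYdens a]
  -- independence
  have hpair : Measure.map (fun ω => (θ ω, Y ω)) μ₀ =
      (Measure.map θ μ₀).prod (Measure.map Y μ₀) :=
    (indepFun_iff_map_prod_eq_prod_map_map hθm.aemeasurable hYm.aemeasurable).mp hindep
  -- build the space
  refine ⟨ℝ × (ℝ × ℝ), inferInstance, (Measure.map θ μ₀).prod (rho f), inferInstance,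
    fun i ω => ω.1 * G (i : ℕ) ω.2 + m, ?_, ?_, ?_⟩
  · intro i
    exact ((measurable_fst.mul ((hGm i).comp measurable_snd)).add_const m)
  · intro i x
    have hsetm : MeasurableSet {q : ℝ × ℝ | q.1 * q.2 + m ≤ x} :=
      measurableSet_le ((measurable_fst.mul measurable_snd).add_const m) measurable_const
    have hpre : {ω : ℝ × (ℝ × ℝ) | ω.1 * G (i : ℕ) ω.2 + m ≤ x} =
        (Prod.map (id : ℝ → ℝ) (G (i : ℕ))) ⁻¹' {q : ℝ × ℝ | q.1 * q.2 + m ≤ x} := rfl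
    rw [hpre, ← Measure.map_apply (measurable_id.prodMap (hGm i)) hsetm]
    rw [← Measure.map_prod_map _ _ measurable_id (hGm i), Measure.map_id, hGlaw i, ← hpair]
    rw [Measure.map_apply (hθm.prodMk hYm) hsetm]
    rw [show (fun ω => (θ ω, Y ω)) ⁻¹' {q : ℝ × ℝ | q.1 * q.2 + m ≤ x}
      = {ω : Ω₀ | θ ω * Y ω + m ≤ x} from rfl]
    rw [hF x, ENNReal.ofReal_toReal (measure_ne_top μ₀ _)]
  · have hall : {ω : ℝ × (ℝ × ℝ) | ∑ i : Fin n, (ω.1 * G (i : ℕ) ω.2 + m) = n * m} =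
        Set.univ := by
      apply Set.eq_univ_iff_forall.mpr
      intro ω
      have hTsum : ∑ i : Fin n, Tmap n (i : ℕ) (ω.2.1 / bfun f ω.2.2) = 0 := by
        rw [Fin.sum_univ_eq_sum_range (fun i => Tmap n i (ω.2.1 / bfun f ω.2.2)) n]
        exact Tmap_sum n hn _
      have hGsum : ∑ i : Fin n, G (i : ℕ) ω.2 = 0 := by
        rw [hG]
        simp only
        rw [← Finset.mul_sum, hTsum, mul_zero]
      show ∑ i : Fin n, (ω.1 * G (i : ℕ) ω.2 + m) = n * m
      rw [Finset.sum_add_distrib, ← Finset.mul_sum, hGsum, mul_zero, zero_add,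
        Finset.sum_const, Finset.card_univ, Fintype.card_fin, nsmul_eq_mul]
    rw [hall]
    exact measure_univ
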